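/- For every o ∈ 𝒳, the function t ↦ d_KL(P_t(o,·), π) is differentiable on (0,∞) and its derivative satisfies −(d/dt) d_KL(P_t(o,·), π) = Σ_{x,y ∈ 𝒳} P_t(o,x) K(x,y) ( log(P_t(o,x)/π(x)) − log(P_t(o,y)/π(y)) ) for all t > 0. -/

import Mathlib

open scoped Classical

noncomputable section

/-- `n`-th power of a kernel `K` on a finite set. -/
def matPow {X : Type*} [Fintype X] [DecidableEq X] (K : X → X → ℝ) : ℕ → X → X → ℝ
  | 0 => fun x y => if x = y then 1 else 0
  | n + 1 => fun x y => ∑ z, matPow K n x z * K z y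

/-- `K` is a stochastic matrix with entries in `[0,1]` and rows summing to `1`. -/
def IsStochastic {X : Type*} [Fintype X] (K : X → X → ℝ) : Prop :=
  (∀ x y, 0 ≤ K x y ∧ K x y ≤ 1) ∧ ∀ x, ∑ y, K x y = 1

/-- Irreducibility: any state can be reached from any state. -/
def IsIrreducibleMatrix {X : Type*} [Fintype X] [DecidableEq X] (K : X → X → ℝ) : Prop :=
  ∀ x y, ∃ n : ℕ, 0 < matPow K n x y

/-- `π` is the (positive) stationary probability vector of `K`. -/
def IsStationaryProb {X : Type*} [Fintype X] (K : X → X → ℝ) (π : X → ℝ) : Prop :=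
  (∀ x, 0 < π x) ∧ (∑ x, π x = 1) ∧ ∀ y, ∑ x, π x * K x y = π y

/-- A probability vector on a finite set. -/
def IsProbVector {X : Type*} [Fintype X] (μ : X → ℝ) : Prop :=
  (∀ x, 0 ≤ μ x) ∧ ∑ x, μ x = 1

/-- Continuous-time heat kernel `P_t(x,y) = e^{-t} ∑ t^n/n! Kⁿ(x,y)`. -/
def heatKernel {X : Type*} [Fintype X] [DecidableEq X] (K : X → X → ℝ) (t : ℝ) (x y : X) : ℝ :=
  Real.exp (-t) * ∑' n : ℕ, t ^ n / (Nat.factorial n : ℝ) * matPow K n x y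

/-- Total variation distance between two vectors. -/
def dTV {X : Type*} [Fintype X] (μ ν : X → ℝ) : ℝ := (∑ x, |μ x - ν x|) / 2

/-- Relative entropy (Kullback–Leibler divergence). -/
def dKL {X : Type*} [Fintype X] (μ ν : X → ℝ) : ℝ := ∑ x, μ x * Real.log (μ x / ν x)

/-- Varentropy. -/
def varKL {X : Type*} [Fintype X] (μ ν : X → ℝ) : ℝ :=
  ∑ x, μ x * (Real.log (μ x / ν x) - dKL μ ν) ^ 2

/-- Worst-case total variation distance to equilibrium at time `t`. -/
def worstTV {X : Type*} [Fintype X] [DecidableEq X] (K : X → X → ℝ) (π : X → ℝ) (t : ℝ) : ℝ :=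
  sSup {v : ℝ | ∃ o : X, v = dTV (heatKernel K t o) π}

/-- Worst-case relative entropy to equilibrium at time `t`. -/
def worstKL {X : Type*} [Fintype X] [DecidableEq X] (K : X → X → ℝ) (π : X → ℝ) (t : ℝ) : ℝ :=
  sSup {v : ℝ | ∃ o : X, v = dKL (heatKernel K t o) π}

/-- Worst-case varentropy at time `t`. -/
def worstVar {X : Type*} [Fintype X] [DecidableEq X] (K : X → X → ℝ) (π : X → ℝ) (t : ℝ) : ℝ :=
  sSup {v : ℝ | ∃ o : X, v = varKL (heatKernel K t o) π}

/-- Mixing time: first time the worst-case TV distance drops below `ε`. -/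
def mixingTime {X : Type*} [Fintype X] [DecidableEq X] (K : X → X → ℝ) (π : X → ℝ) (ε : ℝ) : ℝ :=
  sInf {t : ℝ | 0 ≤ t ∧ worstTV K π t ≤ ε}

/-- Variance of `f` with respect to `π`. -/
def varPi {X : Type*} [Fintype X] (π f : X → ℝ) : ℝ :=
  ∑ x, π x * (f x - ∑ y, π y * f y) ^ 2

/-- Poincaré constant: the largest `γ` with `γ·Var_π(f) ≤ (1/2)∑ π(x)K(x,y)(f(x)-f(y))²`. -/
def poincare {X : Type*} [Fintype X] (K : X → X → ℝ) (π : X → ℝ) : ℝ :=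
  sSup {γ : ℝ | ∀ f : X → ℝ, γ * varPi π f ≤ (∑ x, ∑ y, π x * K x y * (f x - f y) ^ 2) / 2}

/-- Smallest non-zero entry of `K`. -/
def minEntry {X : Type*} [Fintype X] (K : X → X → ℝ) : ℝ :=
  sInf {v : ℝ | (∃ x y, v = K x y) ∧ 0 < v}

/-- Smallest stationary probability `p = min_x π(x)`. -/
def statMin {X : Type*} [Fintype X] (π : X → ℝ) : ℝ :=
  sInf {v : ℝ | ∃ x, v = π x}

/-- The support of `K` is symmetric. -/
def SymmSupport {X : Type*} (K : X → X → ℝ) : Prop :=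
  ∀ x y, 0 < K x y → 0 < K y x

/-- Graph distance associated with the support of `K`. -/
def mdist {X : Type*} [Fintype X] [DecidableEq X] (K : X → X → ℝ) (x y : X) : ℕ :=
  sInf {n : ℕ | 0 < matPow K n x y}

/-- Diameter of the state space for the distance `mdist`. -/
def mdiam {X : Type*} [Fintype X] [DecidableEq X] (K : X → X → ℝ) : ℕ :=
  Finset.sup Finset.univ fun p : X × X => mdist K p.1 p.2

/-- Lipschitz norm of `f` with respect to `mdist`. -/
def lipNorm {X : Type*} [Fintype X] [DecidableEq X] (K : X → X → ℝ) (f : X → ℝ) : ℝ :=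
  sSup {v : ℝ | ∃ x y, x ≠ y ∧ v = |f x - f y| / (mdist K x y : ℝ)}

section Helpers

variable {X : Type*} [Fintype X] [DecidableEq X]

lemma matPow_eq_pow (K : X → X → ℝ) (n : ℕ) (x y : X) :
    matPow K n x y = ((Matrix.of K) ^ n) x y := by
  induction n generalizing x y with
  | zero => simp [matPow, Matrix.one_apply]
  | succ n ih =>
    rw [pow_succ, Matrix.mul_apply]
    simp only [matPow, ih, Matrix.of_apply]

lemma matPow_nonneg {K : X → X → ℝ} (hK : IsStochastic K) (n : ℕ) (x y : X) :
    0 ≤ matPow K n x y := by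
  induction n generalizing x y with
  | zero => simp only [matPow]; split_ifs <;> norm_num
  | succ n ih => exact Finset.sum_nonneg fun z _ => mul_nonneg (ih x z) (hK.1 z y).1

lemma matPow_rowSum {K : X → X → ℝ} (hK : IsStochastic K) (n : ℕ) (x : X) :
    ∑ y, matPow K n x y = 1 := by
  induction n generalizing x with
  | zero => simp [matPow]
  | succ n ih =>
    simp only [matPow]
    rw [Finset.sum_comm]
    simp_rw [← Finset.mul_sum, hK.2, mul_one]
    exact ih x

lemma matPow_le_one {K : X → X → ℝ} (hK : IsStochastic K) (n : ℕ) (x y : X) :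
    matPow K n x y ≤ 1 := by
  calc matPow K n x y ≤ ∑ z, matPow K n x z :=
        Finset.single_le_sum (fun z _ => matPow_nonneg hK n x z) (Finset.mem_univ y)
    _ = 1 := matPow_rowSum hK n x

lemma heatKernel_hasDerivAt (K : X → X → ℝ) (o x : X) (t : ℝ) :
    HasDerivAt (fun u => heatKernel K u o x)
      ((∑ z, heatKernel K t o z * K z x) - heatKernel K t o x) t := by
  letI : SeminormedRing (Matrix X X ℝ) := Matrix.linftyOpSemiNormedRing
  letI : NormedRing (Matrix X X ℝ) := Matrix.linftyOpNormedRing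
  letI : NormedAlgebra ℝ (Matrix X X ℝ) := Matrix.linftyOpNormedAlgebra
  set M : Matrix X X ℝ := Matrix.of K with hM
  let lm : X → (Matrix X X ℝ →ₗ[ℝ] ℝ) := fun z =>
    { toFun := fun A => A o z, map_add' := fun _ _ => rfl, map_smul' := fun _ _ => rfl }
  let L : X → (Matrix X X ℝ →L[ℝ] ℝ) := fun z =>
    { lm z with cont := (lm z).continuous_of_finiteDimensional }
  have key : ∀ (u : ℝ) (z : X),
      heatKernel K u o z = Real.exp (-u) * L z (NormedSpace.exp (u • M)) := by
    intro u z
    have hs : HasSum (fun n : ℕ => ((n.factorial : ℝ)⁻¹) • (u • M) ^ n)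
        (NormedSpace.exp (u • M)) := NormedSpace.exp_series_hasSum_exp' (u • M)
    have hs2 := hs.mapL (L z)
    have hfun : ∀ n : ℕ, L z (((n.factorial : ℝ)⁻¹) • (u • M) ^ n)
        = u ^ n / (n.factorial : ℝ) * matPow K n o z := by
      intro n
      rw [smul_pow, map_smul, map_smul]
      show (n.factorial : ℝ)⁻¹ • (u ^ n • ((M ^ n) o z)) = _
      rw [← matPow_eq_pow, smul_eq_mul, smul_eq_mul]
      ring
    unfold heatKernel
    congr 1
    rw [← hs2.tsum_eq]
    exact tsum_congr fun n => (hfun n).symm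
  have hD : HasDerivAt (fun u : ℝ => L x (NormedSpace.exp (u • M)))
      (L x (NormedSpace.exp (t • M) * M)) t := by
    have h := hasDerivAt_exp_smul_const (𝕂 := ℝ) M t
    exact (L x).hasFDerivAt.comp_hasDerivAt t h
  have hE : HasDerivAt (fun u : ℝ => Real.exp (-u)) (Real.exp (-t) * (-1)) t :=
    (hasDerivAt_neg t).exp
  have hprod := hE.mul hD
  have hval : Real.exp (-t) * (-1) * L x (NormedSpace.exp (t • M)) +
        Real.exp (-t) * L x (NormedSpace.exp (t • M) * M)
      = (∑ z, heatKernel K t o z * K z x) - heatKernel K t o x := by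
    have hmul : L x (NormedSpace.exp (t • M) * M)
        = ∑ z, (NormedSpace.exp (t • M)) o z * K z x := by
      show (NormedSpace.exp (t • M) * M) o x = _
      rw [Matrix.mul_apply]
      rfl
    have hterm : ∀ z, Real.exp (-t) * (NormedSpace.exp (t • M) o z * K z x)
        = heatKernel K t o z * K z x := by
      intro z
      rw [key t z]
      show Real.exp (-t) * (NormedSpace.exp (t • M) o z * K z x)
        = Real.exp (-t) * NormedSpace.exp (t • M) o z * K z x
      ring
    rw [hmul, Finset.mul_sum, Finset.sum_congr rfl fun z _ => hterm z, key t x]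
    ring
  rw [← hval]
  exact hprod.congr_of_eventuallyEq (Filter.Eventually.of_forall fun u => key u x)

lemma heatKernel_pos {K : X → X → ℝ} (hK : IsStochastic K) (hirr : IsIrreducibleMatrix K)
    {t : ℝ} (ht : 0 < t) (o x : X) : 0 < heatKernel K t o x := by
  obtain ⟨n, hn⟩ := hirr o x
  have hnn : ∀ m : ℕ, 0 ≤ t ^ m / (m.factorial : ℝ) * matPow K m o x := fun m =>
    mul_nonneg (by positivity) (matPow_nonneg hK m o x)
  have hsum : Summable (fun m : ℕ => t ^ m / (m.factorial : ℝ) * matPow K m o x) :=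
    Summable.of_nonneg_of_le hnn
      (fun m => mul_le_of_le_one_right (by positivity) (matPow_le_one hK m o x))
      (Real.summable_pow_div_factorial t)
  have hterm : 0 < t ^ n / (n.factorial : ℝ) * matPow K n o x :=
    mul_pos (by positivity) hn
  have hle := Summable.le_tsum hsum n (fun m _ => hnn m)
  exact mul_pos (Real.exp_pos _) (lt_of_lt_of_le hterm hle)

end Helpers

/-- Derivative of the relative entropy along the semi-group. -/
theorem stmt_9 {X : Type*} [Fintype X] [DecidableEq X]
    (hcard : 2 ≤ Fintype.card X)
    (K : X → X → ℝ) (π : X → ℝ)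
    (hK : IsStochastic K) (hirr : IsIrreducibleMatrix K) (hπ : IsStationaryProb K π)
    (o : X) :
    DifferentiableOn ℝ (fun u => dKL (heatKernel K u o) π) (Set.Ioi (0 : ℝ)) ∧
    ∀ t : ℝ, 0 < t →
      -deriv (fun u => dKL (heatKernel K u o) π) t =
        ∑ x, ∑ y, heatKernel K t o x * K x y *
          (Real.log (heatKernel K t o x / π x) - Real.log (heatKernel K t o y / π y)) := by
  obtain ⟨hπpos, hπsum, hπstat⟩ := hπ
  have main : ∀ t : ℝ, 0 < t →
      HasDerivAt (fun u => dKL (heatKernel K u o) π)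
        (∑ x, ((∑ z, heatKernel K t o z * K z x) - heatKernel K t o x) *
            (Real.log (heatKernel K t o x / π x) + 1)) t := by
    intro t ht
    have hx : ∀ x : X,
        HasDerivAt (fun u => heatKernel K u o x * Real.log (heatKernel K u o x / π x))
        (((∑ z, heatKernel K t o z * K z x) - heatKernel K t o x) *
          (Real.log (heatKernel K t o x / π x) + 1)) t := by
      intro x
      have hpos := heatKernel_pos hK hirr ht o x
      have hπx := hπpos x
      have hf := heatKernel_hasDerivAt K o x t
      have hg : HasDerivAt (fun u => heatKernel K u o x / π x)
          (((∑ z, heatKernel K t o z * K z x) - heatKernel K t o x) / π x) t :=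
        hf.div_const _
      have hne : heatKernel K t o x / π x ≠ 0 := by positivity
      have hlog := hg.log hne
      have hh := hf.fun_mul hlog
      refine hh.congr_deriv ?_
      rw [div_div_div_cancel_right₀ hπx.ne', mul_div_cancel₀ _ hpos.ne']
      ring
    have hsum := HasDerivAt.fun_sum (fun x (_ : x ∈ Finset.univ) => hx x)
    simpa only [dKL] using hsum
  constructor
  · intro t ht
    exact ((main t ht).differentiableAt).differentiableWithinAt
  · intro t ht
    rw [(main t ht).deriv]
    have hrow := hK.2
    set h : X → ℝ := heatKernel K t o with hdef
    set Lg : X → ℝ := fun x => Real.log (h x / π x) with hLg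
    have hS : ∑ x, ∑ z, h z * K z x = ∑ x, h x := by
      rw [Finset.sum_comm]
      simp_rw [← Finset.mul_sum, hrow, mul_one]
    have hRHS : ∑ x, ∑ y, h x * K x y * (Lg x - Lg y)
        = ∑ x, h x * Lg x - ∑ y, (∑ z, h z * K z y) * Lg y := by
      simp_rw [mul_sub]
      simp_rw [Finset.sum_sub_distrib]
      congr 1
      · rw [Finset.sum_congr rfl fun x _ => ?_]
        rw [Finset.sum_congr rfl fun y _ => show h x * K x y * Lg x = h x * Lg x * K x y by ring,
          ← Finset.mul_sum, hrow, mul_one]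
      · rw [Finset.sum_comm]
        congr 1
        funext y
        rw [Finset.sum_mul]
    rw [hRHS]
    have hexp : ∑ x, ((∑ z, h z * K z x) - h x) * (Lg x + 1)
        = (∑ x, (∑ z, h z * K z x) * Lg x - ∑ x, h x * Lg x)
          + (∑ x, ∑ z, h z * K z x - ∑ x, h x) := by
      simp_rw [sub_mul, mul_add, mul_one]
      simp_rw [Finset.sum_sub_distrib]
      simp_rw [Finset.sum_add_distrib]
      ring
    rw [hexp, hS, sub_self, add_zero]
    ring
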